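/- arXiv:2012.05634 — 4 statements merged into one kernel-verified Lean document; each statement's English description precedes it below -/
import Mathlib

section
/- Let g(t) = Σ_k a_k t^k be a polynomial with complex coefficients and n a positive integer. Then g(t) is divisible by ([n]_t)^{ℓ+1}, where [n]_t = 1 + t + ... + t^{n-1}, if and only if for every integer r with 0 ≤ r ≤ ℓ, the sums Σ_{k ≡ j mod n} a_k k^r are equal for all residues j = 0, 1, ..., n-1. -/
open Polynomial Finset

/-- Triangular change of basis between two families of sums. -/
lemma aux_triangular (V W : ℕ → ℂ) (c : ℕ → ℕ → ℂ)
    (hc : ∀ r, c r r = 1)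
    (hW : ∀ r, W r = ∑ s ∈ range (r + 1), c r s * V s) (ℓ : ℕ) :
    (∀ r ≤ ℓ, W r = 0) ↔ (∀ r ≤ ℓ, V r = 0) := by
  constructor
  · intro h r hr
    induction r using Nat.strong_induction_on with
    | _ r ih =>
      have h1 : W r = 0 := h r hr
      rw [hW, sum_range_succ, hc, one_mul] at h1
      have h2 : ∑ s ∈ range r, c r s * V s = 0 := by
        apply sum_eq_zero; intro s hs
        rw [ih s (mem_range.1 hs) (le_trans (le_of_lt (mem_range.1 hs)) hr), mul_zero]
      rw [h2, zero_add] at h1; exact h1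
  · intro h r hr
    rw [hW]
    apply sum_eq_zero; intro s hs
    rw [h s (le_trans (Nat.lt_succ_iff.1 (mem_range.1 hs)) hr), mul_zero]

lemma aux_geom_sum_eq_zero {ζ : ℂ} {n : ℕ} (h1 : ζ ^ n = 1) (h2 : ζ ≠ 1) :
    ∑ i ∈ range n, ζ ^ i = 0 := by
  have h := geom_sum_mul ζ n
  rw [h1, sub_self] at h
  exact (mul_eq_zero.1 h).resolve_right (sub_ne_zero.2 h2)

lemma aux_W_eq (g : Polynomial ℂ) (ζ : ℂ) (r : ℕ) :
    ζ ^ r * (derivative^[r] g).eval ζ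
      = ∑ k ∈ range (g.natDegree + 1), g.coeff k * (k.descFactorial r : ℂ) * ζ ^ k := by
  set N := g.natDegree with hN
  have hdeg : (derivative^[r] g).natDegree < N + 1 :=
    lt_of_le_of_lt (le_trans (natDegree_iterate_derivative g r) (Nat.sub_le _ _))
      (Nat.lt_succ_self N)
  rw [eval_eq_sum_range' hdeg, Finset.mul_sum]
  have key : ∀ m ∈ range (N + 1),
      ζ ^ r * ((derivative^[r] g).coeff m * ζ ^ m)
        = g.coeff (r + m) * ((r + m).descFactorial r : ℂ) * ζ ^ (r + m) := by
    intro m _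
    rw [coeff_iterate_derivative, nsmul_eq_mul]
    have h : m + r = r + m := Nat.add_comm m r
    rw [h, pow_add]
    ring
  rw [Finset.sum_congr rfl key]
  have hext : ∑ k ∈ range (N + 1), g.coeff k * (k.descFactorial r : ℂ) * ζ ^ k
      = ∑ k ∈ range (r + (N + 1)), g.coeff k * (k.descFactorial r : ℂ) * ζ ^ k := by
    apply Finset.sum_subset (Finset.range_subset_range.2 (by omega))
    intro k _ hk
    have hk' : N < k := by
      have := mem_range.not.1 hk; omega
    rw [coeff_eq_zero_of_natDegree_lt hk', zero_mul, zero_mul]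
  rw [hext]
  conv_rhs => rw [Finset.sum_range_add]
  have hz : ∑ k ∈ range r, g.coeff k * (k.descFactorial r : ℂ) * ζ ^ k = 0 := by
    apply sum_eq_zero; intro k hk
    rw [Nat.descFactorial_eq_zero_iff_lt.2 (mem_range.1 hk), Nat.cast_zero, mul_zero, zero_mul]
  rw [hz, zero_add]

lemma aux_W_expand (g : Polynomial ℂ) (ζ : ℂ) (r : ℕ) :
    ∑ k ∈ range (g.natDegree + 1), g.coeff k * (k.descFactorial r : ℂ) * ζ ^ k
      = ∑ s ∈ range (r + 1), (descPochhammer ℂ r).coeff s *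
          ∑ k ∈ range (g.natDegree + 1), g.coeff k * (k : ℂ) ^ s * ζ ^ k := by
  have hdf : ∀ k : ℕ, (k.descFactorial r : ℂ)
      = ∑ s ∈ range (r + 1), (descPochhammer ℂ r).coeff s * (k : ℂ) ^ s := by
    intro k
    rw [← descPochhammer_eval_eq_descFactorial ℂ k r]
    conv_lhs => rw [eval_eq_sum_range' (n := r + 1)
      (by rw [descPochhammer_natDegree]; exact Nat.lt_succ_self r)]
  have step : ∀ k ∈ range (g.natDegree + 1),
      g.coeff k * (k.descFactorial r : ℂ) * ζ ^ k
        = ∑ s ∈ range (r + 1), (descPochhammer ℂ r).coeff s *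
            (g.coeff k * (k : ℂ) ^ s * ζ ^ k) := by
    intro k _
    rw [hdf k, Finset.mul_sum, Finset.sum_mul]
    apply Finset.sum_congr rfl
    intro s _
    ring
  rw [Finset.sum_congr rfl step, Finset.sum_comm]
  apply Finset.sum_congr rfl
  intro s _
  rw [Finset.mul_sum]

lemma aux_derivs_iff_powersums (g : Polynomial ℂ) (ζ : ℂ) (hζ : ζ ≠ 0) (ℓ : ℕ) :
    (∀ r ≤ ℓ, (derivative^[r] g).eval ζ = 0) ↔
      (∀ r ≤ ℓ, ∑ k ∈ range (g.natDegree + 1), g.coeff k * (k : ℂ) ^ r * ζ ^ k = 0) := by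
  have ht := aux_triangular
    (fun s => ∑ k ∈ range (g.natDegree + 1), g.coeff k * (k : ℂ) ^ s * ζ ^ k)
    (fun r => ∑ k ∈ range (g.natDegree + 1), g.coeff k * (k.descFactorial r : ℂ) * ζ ^ k)
    (fun r s => (descPochhammer ℂ r).coeff s)
    (fun r => by
      have := (monic_descPochhammer ℂ r).coeff_natDegree
      rwa [descPochhammer_natDegree] at this)
    (fun r => aux_W_expand g ζ r) ℓ
  rw [← ht]
  apply forall₂_congr
  intro r hr
  rw [← aux_W_eq]
  constructor
  · intro h; rw [h, mul_zero]
  · intro h; exact (mul_eq_zero.1 h).resolve_left (pow_ne_zero r hζ)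

lemma aux_dvd_iff_derivs (g : Polynomial ℂ) (hg : g ≠ 0) (ζ : ℂ) (ℓ : ℕ) :
    ((X - C ζ) ^ (ℓ + 1) ∣ g) ↔ ∀ r ≤ ℓ, (derivative^[r] g).eval ζ = 0 := by
  rw [← Polynomial.le_rootMultiplicity_iff hg, Nat.succ_le_iff,
    Polynomial.lt_rootMultiplicity_iff_isRoot_iterate_derivative_of_mem_nonZeroDivisors hg
      (mem_nonZeroDivisors_of_ne_zero (Nat.cast_ne_zero.2 (Nat.factorial_ne_zero ℓ)))]
  rfl

lemma aux_P_eq_prod (n : ℕ) (hn : 0 < n) :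
    (∑ i ∈ range n, (X : Polynomial ℂ) ^ i)
      = ∏ ζ ∈ (nthRootsFinset n (1 : ℂ)).erase 1, (X - C ζ) := by
  have hω := Complex.isPrimitiveRoot_exp n hn.ne'
  have h1 : (X : Polynomial ℂ) ^ n - 1 = ∏ ζ ∈ nthRootsFinset n (1 : ℂ), (X - C ζ) :=
    X_pow_sub_one_eq_prod hn hω
  have h2 : (X - C (1 : ℂ)) * ∏ ζ ∈ (nthRootsFinset n (1 : ℂ)).erase 1, (X - C ζ)
      = ∏ ζ ∈ nthRootsFinset n (1 : ℂ), (X - C ζ) :=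
    Finset.mul_prod_erase (nthRootsFinset n (1 : ℂ)) (fun ζ => X - C ζ) (one_mem_nthRootsFinset hn)
  have h3 : ((X : Polynomial ℂ) - C 1) * (∑ i ∈ range n, X ^ i) = X ^ n - 1 := by
    rw [map_one, mul_comm]; exact geom_sum_mul X n
  apply mul_left_cancel₀ (X_sub_C_ne_zero (1 : ℂ))
  rw [h3, h1, h2]

lemma aux_dvd_P_pow_iff (g : Polynomial ℂ) (n : ℕ) (hn : 0 < n) (ℓ : ℕ) :
    ((∑ i ∈ range n, (X : Polynomial ℂ) ^ i) ^ (ℓ + 1) ∣ g) ↔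
      ∀ ζ : ℂ, ζ ^ n = 1 → ζ ≠ 1 → (X - C ζ) ^ (ℓ + 1) ∣ g := by
  rw [aux_P_eq_prod n hn, ← Finset.prod_pow]
  constructor
  · intro h ζ h1 h2
    refine dvd_trans ?_ h
    apply Finset.dvd_prod_of_mem
    exact mem_erase.2 ⟨h2, (mem_nthRootsFinset hn (1 : ℂ)).2 h1⟩
  · intro h
    apply Finset.prod_dvd_of_coprime
    · intro x hx y hy hxy
      exact (Polynomial.pairwise_coprime_X_sub_C Function.injective_id hxy).pow
    · intro ζ hζ
      obtain ⟨h2, h1⟩ := mem_erase.1 hζ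
      exact h ζ ((mem_nthRootsFinset hn (1 : ℂ)).1 h1) h2

lemma aux_pow_mod {ζ : ℂ} {n : ℕ} (hζ : ζ ^ n = 1) (k : ℕ) : ζ ^ k = ζ ^ (k % n) := by
  conv_lhs => rw [← Nat.div_add_mod k n]
  rw [pow_add, pow_mul, hζ, one_pow, one_mul]

lemma aux_group_sum (N n : ℕ) (hn : 0 < n) (f : ℕ → ℂ) (ζ : ℂ) (hζ : ζ ^ n = 1) :
    ∑ k ∈ range (N + 1), f k * ζ ^ k
      = ∑ j ∈ range n, (∑ k ∈ range (N + 1), if k % n = j then f k else 0) * ζ ^ j := by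
  have h : ∀ j ∈ range n, (∑ k ∈ range (N + 1), if k % n = j then f k else 0) * ζ ^ j
      = ∑ k ∈ range (N + 1), if k % n = j then f k * ζ ^ j else 0 := by
    intro j _
    rw [Finset.sum_mul]
    apply Finset.sum_congr rfl
    intro k _
    split <;> simp
  rw [Finset.sum_congr rfl h, Finset.sum_comm]
  apply Finset.sum_congr rfl
  intro k _
  have hmem : k % n ∈ range n := mem_range.2 (Nat.mod_lt k hn)
  rw [Finset.sum_ite_eq (range n) (k % n) (fun j => f k * ζ ^ j), if_pos hmem,
    ← aux_pow_mod hζ k]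

lemma aux_group_sum' (g : Polynomial ℂ) (r n : ℕ) (hn : 0 < n) (ζ : ℂ) (hζ : ζ ^ n = 1) :
    ∑ k ∈ range (g.natDegree + 1), g.coeff k * (k : ℂ) ^ r * ζ ^ k
      = ∑ j ∈ range n, (∑ k ∈ range (g.natDegree + 1),
          if k % n = j then g.coeff k * (k : ℂ) ^ r else 0) * ζ ^ j :=
  aux_group_sum g.natDegree n hn (fun k => g.coeff k * (k : ℂ) ^ r) ζ hζ

lemma aux_fourier (n : ℕ) (hn : 0 < n) (T : ℕ → ℂ)
    (H : ∀ ζ : ℂ, ζ ^ n = 1 → ζ ≠ 1 → ∑ j ∈ range n, T j * ζ ^ j = 0) :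
    ∀ j < n, (n : ℂ) * T j = ∑ m ∈ range n, T m := by
  intro j hj
  have hω := Complex.isPrimitiveRoot_exp n hn.ne'
  set ω := Complex.exp (2 * Real.pi * Complex.I / n) with hωdef
  have hωn : ω ^ n = 1 := hω.pow_eq_one
  have key : ∀ i : ℕ, (ω ^ i) ^ n = 1 := fun i => by
    rw [← pow_mul, mul_comm, pow_mul, hωn, one_pow]
  have A1 : ∑ i ∈ range n, (∑ m ∈ range n, T m * (ω ^ i) ^ m) * (ω ^ i) ^ (n - j)
      = ∑ m ∈ range n, T m := by
    rw [Finset.sum_eq_single_of_mem 0 (mem_range.2 hn)]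
    · simp
    · intro i hi hi0
      rw [H (ω ^ i) (key i)
        (hω.pow_ne_one_of_pos_of_lt hi0 (mem_range.1 hi)), zero_mul]
  have A2 : ∑ i ∈ range n, (∑ m ∈ range n, T m * (ω ^ i) ^ m) * (ω ^ i) ^ (n - j)
      = (n : ℂ) * T j := by
    have step1 : ∀ i ∈ range n, (∑ m ∈ range n, T m * (ω ^ i) ^ m) * (ω ^ i) ^ (n - j)
        = ∑ m ∈ range n, T m * (ω ^ (m + (n - j))) ^ i := by
      intro i _
      rw [Finset.sum_mul]
      apply Finset.sum_congr rfl
      intro m _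
      rw [mul_assoc, ← pow_add, ← pow_mul, mul_comm i (m + (n - j)), pow_mul]
    rw [Finset.sum_congr rfl step1, Finset.sum_comm]
    have inner : ∀ m ∈ range n, ∑ i ∈ range n, T m * (ω ^ (m + (n - j))) ^ i
        = if m = j then (n : ℂ) * T j else 0 := by
      intro m hm
      rw [← Finset.mul_sum]
      by_cases hmj : m = j
      · subst hmj
        rw [if_pos rfl, Nat.add_sub_cancel' hj.le, hωn]
        simp [mul_comm]
      · rw [if_neg hmj]
        have hne : ω ^ (m + (n - j)) ≠ 1 := by
          intro h1
          rw [hω.pow_eq_one_iff_dvd] at h1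
          obtain ⟨c, hc⟩ := h1
          have hm' : m < n := mem_range.1 hm
          have hc2 : c < 2 := by
            by_contra hcon
            push_neg at hcon
            have h2 : n * 2 ≤ n * c := Nat.mul_le_mul_left n hcon
            omega
          interval_cases c <;> omega
        rw [aux_geom_sum_eq_zero (by rw [← pow_mul, mul_comm, pow_mul, hωn, one_pow]) hne,
          mul_zero]
    rw [Finset.sum_congr rfl inner, Finset.sum_ite_eq' (range n) j (fun _ => (n : ℂ) * T j),
      if_pos (mem_range.2 hj)]
  rw [← A2, A1]

/-- Lemma on cyclotomic-type divisibility via power sums of coefficients: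
`g(t)` is divisible by `([n]_t)^(ℓ+1)`, where `[n]_t = 1 + t + ⋯ + t^(n-1)`, iff for every
`r ≤ ℓ` the sums `∑_{k ≡ j mod n} a_k k^r` agree for all residues `j < n`. -/
theorem stmt0 (g : Polynomial ℂ) (n : ℕ) (hn : 0 < n) (ℓ : ℕ) :
    ((∑ i ∈ Finset.range n, (X : Polynomial ℂ) ^ i) ^ (ℓ + 1) ∣ g) ↔
      ∀ r ≤ ℓ, ∀ j₁ < n, ∀ j₂ < n,
        (∑ k ∈ Finset.range (g.natDegree + 1),
            if k % n = j₁ then g.coeff k * (k : ℂ) ^ r else 0) =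
        (∑ k ∈ Finset.range (g.natDegree + 1),
            if k % n = j₂ then g.coeff k * (k : ℂ) ^ r else 0) := by
  by_cases hg : g = 0
  · subst hg
    simp
  · rw [aux_dvd_P_pow_iff g n hn ℓ]
    constructor
    · intro h r hr j₁ hj₁ j₂ hj₂
      have H : ∀ ζ : ℂ, ζ ^ n = 1 → ζ ≠ 1 →
          ∑ j ∈ range n, (∑ k ∈ range (g.natDegree + 1),
            if k % n = j then g.coeff k * (k : ℂ) ^ r else 0) * ζ ^ j = 0 := by
        intro ζ h1 h2
        have hζ0 : ζ ≠ 0 := by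
          intro h0
          rw [h0, zero_pow hn.ne'] at h1
          exact zero_ne_one h1
        have hV := (aux_derivs_iff_powersums g ζ hζ0 ℓ).1
          ((aux_dvd_iff_derivs g hg ζ ℓ).1 (h ζ h1 h2)) r hr
        rw [← aux_group_sum' g r n hn ζ h1]
        exact hV
      have h1 := aux_fourier n hn
        (fun j => ∑ k ∈ range (g.natDegree + 1),
          if k % n = j then g.coeff k * (k : ℂ) ^ r else 0) H j₁ hj₁
      have h2 := aux_fourier n hn
        (fun j => ∑ k ∈ range (g.natDegree + 1),
          if k % n = j then g.coeff k * (k : ℂ) ^ r else 0) H j₂ hj₂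
      have hne : (n : ℂ) ≠ 0 := Nat.cast_ne_zero.2 hn.ne'
      exact mul_left_cancel₀ hne (h1.trans h2.symm)
    · intro h ζ h1 h2
      have hζ0 : ζ ≠ 0 := by
        intro h0
        rw [h0, zero_pow hn.ne'] at h1
        exact zero_ne_one h1
      rw [aux_dvd_iff_derivs g hg ζ ℓ, aux_derivs_iff_powersums g ζ hζ0 ℓ]
      intro r hr
      rw [aux_group_sum' g r n hn ζ h1]
      have hconst : ∀ j ∈ range n,
          (∑ k ∈ range (g.natDegree + 1),
            if k % n = j then g.coeff k * (k : ℂ) ^ r else 0) * ζ ^ j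
          = (∑ k ∈ range (g.natDegree + 1),
            if k % n = 0 then g.coeff k * (k : ℂ) ^ r else 0) * ζ ^ j := by
        intro j hj
        rw [h r hr j (mem_range.1 hj) 0 hn]
      rw [Finset.sum_congr rfl hconst, ← Finset.mul_sum,
        aux_geom_sum_eq_zero h1 h2, mul_zero]
end

section
/- Let g(t) = Σ_k a_k t^k be a polynomial with complex coefficients and n a positive integer. Then g(t) is divisible by ([n]_t)^{ℓ+1} if and only if the congruences (1/n)·g(t) ≡ Σ_{k ≡ 0 mod n} a_k t^k ≡ Σ_{k ≡ 1 mod n} a_k t^k ≡ ... ≡ Σ_{k ≡ n-1 mod n} a_k t^k hold modulo (1-t)^{ℓ+1}. -/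
open Polynomial Finset


lemma pow_mod_eq (n : ℕ) {ζ : ℂ} (hζ : IsPrimitiveRoot ζ n) (c : ℂ) (hc : c ^ n = 1) (k : ℕ) :
    c ^ k = c ^ (k % n) := by
  conv_lhs => rw [← Nat.div_add_mod k n, pow_add, pow_mul, hc, one_pow, one_mul]

lemma orth (n : ℕ) (hn : 0 < n) {ζ : ℂ} (hζ : IsPrimitiveRoot ζ n) {j : ℕ} (hj : j < n) (k : ℕ) :
    ∑ s ∈ range n, ((ζ ^ j)⁻¹) ^ s * (ζ ^ s) ^ k = if k % n = j then (n : ℂ) else 0 := by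
  have hζn : ∀ m : ℕ, (ζ ^ m) ^ n = 1 := fun m => by
    rw [← pow_mul, mul_comm, pow_mul, hζ.pow_eq_one, one_pow]
  have hζ0 : ζ ≠ 0 := hζ.ne_zero hn.ne'
  have hterm : ∀ s, ((ζ ^ j)⁻¹) ^ s * (ζ ^ s) ^ k = ((ζ ^ j)⁻¹ * ζ ^ k) ^ s := fun s => by
    rw [mul_pow, pow_right_comm]
  simp only [hterm]
  have hkmod : ζ ^ k = ζ ^ (k % n) := pow_mod_eq n hζ ζ hζ.pow_eq_one k
  by_cases h : k % n = j
  · have : (ζ ^ j)⁻¹ * ζ ^ k = 1 := by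
      rw [hkmod, h, inv_mul_cancel₀ (pow_ne_zero _ hζ0)]
    simp [this, h]
  · have hne : (ζ ^ j)⁻¹ * ζ ^ k ≠ 1 := by
      intro habs
      have : ζ ^ k = ζ ^ j := by
        field_simp at habs
        rw [habs]
      rw [hkmod] at this
      exact h (hζ.pow_inj (Nat.mod_lt k hn) hj this)
    have hun : ((ζ ^ j)⁻¹ * ζ ^ k) ^ n = 1 := by
      rw [mul_pow, inv_pow, hζn, hζn, inv_one, one_mul]
    rw [geom_sum_eq hne, hun, sub_self, zero_div, if_neg h]

lemma coeff_comp_scale (c : ℂ) (p : ℂ[X]) (k : ℕ) :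
    (p.comp (C c * X)).coeff k = c ^ k * p.coeff k := by
  induction p using Polynomial.induction_on' with
  | add p q hp hq => simp [add_comp, hp, hq, mul_add]
  | monomial i a =>
    rw [← C_mul_X_pow_eq_monomial, mul_comp, C_comp, pow_comp, X_comp, mul_pow, ← C_pow]
    simp only [coeff_C_mul, coeff_X_pow, mul_ite, mul_one, mul_zero]
    split_ifs with h
    · rw [h]; ring
    · ring

lemma Gcoeff (g : ℂ[X]) (n j k : ℕ) :
    (∑ k ∈ Finset.range (g.natDegree + 1),
      if k % n = j then Polynomial.C (g.coeff k) * X ^ k else 0).coeff k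
    = if k % n = j then g.coeff k else 0 := by
  simp only [finset_sum_coeff]
  by_cases hk : k < g.natDegree + 1
  · rw [Finset.sum_eq_single k]
    · split_ifs with h <;> simp
    · intro b _ hb
      split_ifs with h <;> simp [coeff_C_mul, coeff_X_pow, hb.symm]
    · intro h; exact absurd (Finset.mem_range.2 hk) h
  · have hg : g.coeff k = 0 := coeff_eq_zero_of_natDegree_lt (by omega)
    rw [Finset.sum_eq_zero, hg]
    · simp
    · intro b hb
      have : b ≠ k := by rw [Finset.mem_range] at hb; omega
      split_ifs with h <;> simp [coeff_C_mul, coeff_X_pow, this.symm]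

lemma key1 (g : ℂ[X]) (n : ℕ) (hn : 0 < n) {ζ : ℂ} (hζ : IsPrimitiveRoot ζ n) (s : ℕ) :
    g.comp (C (ζ ^ s) * X) = ∑ j ∈ range n,
      C ((ζ ^ s) ^ j) * ∑ k ∈ Finset.range (g.natDegree + 1),
        if k % n = j then Polynomial.C (g.coeff k) * X ^ k else 0 := by
  ext k
  rw [coeff_comp_scale, finset_sum_coeff]
  simp only [coeff_C_mul, Gcoeff]
  rw [Finset.sum_eq_single (k % n)]
  · rw [if_pos rfl]
    congr 1
    exact pow_mod_eq n hζ _ (by rw [← pow_mul, mul_comm, pow_mul, hζ.pow_eq_one, one_pow]) k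
  · intro b _ hb
    rw [if_neg (fun h => hb h.symm), mul_zero]
  · intro h; exact absurd (Finset.mem_range.2 (Nat.mod_lt k hn)) h

lemma key2 (g : ℂ[X]) (n : ℕ) (hn : 0 < n) {ζ : ℂ} (hζ : IsPrimitiveRoot ζ n) {j : ℕ} (hj : j < n) :
    C ((n : ℂ))⁻¹ * ∑ s ∈ range n, C (((ζ ^ j)⁻¹) ^ s) * g.comp (C (ζ ^ s) * X)
      = ∑ k ∈ Finset.range (g.natDegree + 1),
        if k % n = j then Polynomial.C (g.coeff k) * X ^ k else 0 := by
  have hn0 : (n : ℂ) ≠ 0 := Nat.cast_ne_zero.2 hn.ne'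
  ext k
  rw [Gcoeff, coeff_C_mul, finset_sum_coeff]
  simp only [coeff_C_mul, coeff_comp_scale]
  have : ∑ s ∈ range n, ((ζ ^ j)⁻¹) ^ s * ((ζ ^ s) ^ k * g.coeff k)
      = (∑ s ∈ range n, ((ζ ^ j)⁻¹) ^ s * (ζ ^ s) ^ k) * g.coeff k := by
    rw [Finset.sum_mul]; exact Finset.sum_congr rfl fun s _ => by ring
  rw [this, orth n hn hζ hj k]
  split_ifs with h
  · rw [← mul_assoc, inv_mul_cancel₀ hn0, one_mul]
  · rw [zero_mul, mul_zero]

lemma prodfac (n : ℕ) (hn : 0 < n) {ζ : ℂ} (hζ : IsPrimitiveRoot ζ n) :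
    (∑ i ∈ Finset.range n, (X : Polynomial ℂ) ^ i)
      = ∏ s ∈ (range n).erase 0, (X - C (ζ ^ s)) := by
  have himg : nthRootsFinset n (1 : ℂ) = (range n).image (ζ ^ ·) := by
    symm
    apply Finset.eq_of_subset_of_card_le
    · intro x hx
      obtain ⟨s, _, rfl⟩ := Finset.mem_image.1 hx
      exact (mem_nthRootsFinset hn (1 : ℂ)).2 (by rw [← pow_mul, mul_comm, pow_mul, hζ.pow_eq_one, one_pow])
    · rw [hζ.card_nthRootsFinset, Finset.card_image_of_injOn
        (fun a ha b hb h => hζ.pow_inj (Finset.mem_range.1 ha) (Finset.mem_range.1 hb) h),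
        Finset.card_range]
  have hXn : (X : ℂ[X]) ^ n - 1 = ∏ s ∈ range n, (X - C (ζ ^ s)) := by
    rw [X_pow_sub_one_eq_prod hn hζ, himg, Finset.prod_image
      (fun a ha b hb h => hζ.pow_inj (Finset.mem_range.1 ha) (Finset.mem_range.1 hb) h)]
  have hsplit : ∏ s ∈ range n, (X - C (ζ ^ s))
      = (X - 1) * ∏ s ∈ (range n).erase 0, (X - C (ζ ^ s)) := by
    rw [← Finset.mul_prod_erase _ _ (Finset.mem_range.2 hn)]
    simp
  have hgeo : ((X : ℂ[X]) - 1) * (∑ i ∈ Finset.range n, (X : Polynomial ℂ) ^ i)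
      = X ^ n - 1 := by
    rw [mul_comm, geom_sum_mul]
  have hne : ((X : ℂ[X]) - 1) ≠ 0 := by
    have := X_sub_C_ne_zero (1 : ℂ)
    simpa using this
  apply mul_left_cancel₀ hne
  rw [hgeo, hXn, hsplit]

/-- `g(t)` is divisible by `([n]_t)^(ℓ+1)` iff
`(1/n)·g(t) ≡ ∑_{k ≡ j mod n} a_k t^k  (mod (1-t)^(ℓ+1))` for every residue `j < n`
(this expresses the chain of congruences between `(1/n)g` and all the residue-parts). -/
theorem stmt1 (g : Polynomial ℂ) (n : ℕ) (hn : 0 < n) (ℓ : ℕ) :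
    ((∑ i ∈ Finset.range n, (X : Polynomial ℂ) ^ i) ^ (ℓ + 1) ∣ g) ↔
      ∀ j < n, (1 - X : Polynomial ℂ) ^ (ℓ + 1) ∣
        (Polynomial.C ((n : ℂ))⁻¹ * g -
          ∑ k ∈ Finset.range (g.natDegree + 1),
            if k % n = j then Polynomial.C (g.coeff k) * X ^ k else 0) := by
  obtain ⟨ζ, hζ⟩ : ∃ ζ : ℂ, IsPrimitiveRoot ζ n :=
    ⟨_, Complex.isPrimitiveRoot_exp n hn.ne'⟩
  have hzgeom : ∀ s ∈ (range n).erase 0, ∑ i ∈ range n, ((ζ:ℂ) ^ s) ^ i = 0 := by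
    intro s hs
    obtain ⟨hs0, hsn⟩ := Finset.mem_erase.1 hs
    rw [Finset.mem_range] at hsn
    have h1 : (ζ : ℂ) ^ s ≠ 1 := by
      intro habs
      have := Nat.le_of_dvd (Nat.pos_of_ne_zero hs0) ((hζ.pow_eq_one_iff_dvd s).1 habs)
      omega
    have h2 : ((ζ : ℂ) ^ s) ^ n = 1 := by
      rw [← pow_mul, mul_comm, pow_mul, hζ.pow_eq_one, one_pow]
    rw [geom_sum_eq h1, h2, sub_self, zero_div]
  constructor
  · rintro ⟨q, hq⟩ j hj
    -- each scaled copy (s ≠ 0) is divisible by (1-X)^(ℓ+1)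
    have hps : ∀ s ∈ (range n).erase 0,
        (1 - X : ℂ[X]) ^ (ℓ + 1) ∣ g.comp (C (ζ ^ s) * X) := by
      intro s hs
      rw [hq, mul_comp, pow_comp]
      apply dvd_mul_of_dvd_left
      apply pow_dvd_pow_of_dvd
      have hroot : IsRoot ((∑ i ∈ Finset.range n, (X : Polynomial ℂ) ^ i).comp
          (C (ζ ^ s) * X)) 1 := by
        rw [IsRoot, eval_comp]
        simp only [eval_mul, eval_C, eval_X, mul_one, eval_finset_sum, eval_pow]
        exact hzgeom s hs
      have h1 : ((X : ℂ[X]) - C 1) ∣ _ := dvd_iff_isRoot.2 hroot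
      have : (1 - X : ℂ[X]) = -(X - C 1) := by simp [neg_sub]
      rw [this, neg_dvd]
      exact h1
    rw [← key2 g n hn hζ hj]
    have hsplit : ∑ s ∈ range n, C ((((ζ:ℂ) ^ j)⁻¹) ^ s) * g.comp (C (ζ ^ s) * X)
        = g + ∑ s ∈ (range n).erase 0,
            C ((((ζ:ℂ) ^ j)⁻¹) ^ s) * g.comp (C (ζ ^ s) * X) := by
      rw [← Finset.add_sum_erase _ _ (Finset.mem_range.2 hn)]
      congr 1
      simp
    rw [hsplit]
    have : C ((n : ℂ))⁻¹ * g - C ((n:ℂ))⁻¹ *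
        (g + ∑ s ∈ (range n).erase 0, C ((((ζ:ℂ) ^ j)⁻¹) ^ s) * g.comp (C (ζ ^ s) * X))
        = - (C ((n:ℂ))⁻¹ *
            ∑ s ∈ (range n).erase 0, C ((((ζ:ℂ) ^ j)⁻¹) ^ s) * g.comp (C (ζ ^ s) * X)) := by
      ring
    rw [this, dvd_neg]
    apply Dvd.dvd.mul_left
    apply Finset.dvd_sum
    intro s hs
    exact (hps s hs).mul_left _
  · intro h
    have hζ0 : (ζ : ℂ) ≠ 0 := hζ.ne_zero hn.ne'
    have hdvd : ∀ s ∈ (range n).erase 0, ((X : ℂ[X]) - C (ζ ^ s)) ^ (ℓ + 1) ∣ g := by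
      intro s hs
      have hζs0 : (ζ : ℂ) ^ s ≠ 0 := pow_ne_zero _ hζ0
      -- step 1 : (1-X)^(ℓ+1) ∣ g.comp (C ζ^s X)
      have hcomp : (1 - X : ℂ[X]) ^ (ℓ + 1) ∣ g.comp (C (ζ ^ s) * X) := by
        rw [key1 g n hn hζ s]
        have hrw : (∑ j ∈ range n, C (((ζ:ℂ) ^ s) ^ j) *
              ∑ k ∈ Finset.range (g.natDegree + 1),
                if k % n = j then Polynomial.C (g.coeff k) * X ^ k else 0)
            = ∑ j ∈ range n, C (((ζ:ℂ) ^ s) ^ j) *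
              ((∑ k ∈ Finset.range (g.natDegree + 1),
                if k % n = j then Polynomial.C (g.coeff k) * X ^ k else 0)
               - C ((n : ℂ))⁻¹ * g) := by
          rw [Finset.sum_congr rfl (fun j _ => mul_sub _ _ _), Finset.sum_sub_distrib,
            ← Finset.sum_mul, ← map_sum, hzgeom s hs, map_zero, zero_mul, sub_zero]
        rw [hrw]
        apply Finset.dvd_sum
        intro j hj
        apply Dvd.dvd.mul_left
        have hh := dvd_neg.mpr (h j (Finset.mem_range.1 hj))
        rwa [neg_sub] at hh
      obtain ⟨q, hq⟩ := hcomp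
      have h2 := congrArg (fun p : ℂ[X] => p.comp (C ((ζ ^ s)⁻¹) * X)) hq
      simp only [mul_comp, pow_comp, sub_comp, one_comp, X_comp] at h2
      rw [Polynomial.comp_assoc] at h2
      have hinner : (C ((ζ:ℂ) ^ s) * X).comp (C ((ζ ^ s)⁻¹) * X) = X := by
        rw [mul_comp, C_comp, X_comp, ← mul_assoc, ← C_mul, mul_inv_cancel₀ hζs0, C_1, one_mul]
      rw [hinner, comp_X] at h2
      have e : (1 : ℂ[X]) - C (((ζ:ℂ) ^ s)⁻¹) * X = (X - C ((ζ:ℂ) ^ s)) * C (-(((ζ:ℂ) ^ s)⁻¹)) := by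
        rw [sub_mul, ← C_mul, mul_neg, mul_inv_cancel₀ hζs0, map_neg, map_neg, map_one]
        ring
      rw [h2, e, mul_pow]
      exact Dvd.dvd.mul_right (dvd_mul_right _ _) _
    rw [prodfac n hn hζ, ← Finset.prod_pow]
    apply Finset.prod_dvd_of_coprime
    · intro a ha b hb hab
      apply IsCoprime.pow
      apply isCoprime_X_sub_C_of_isUnit_sub
      rw [isUnit_iff_ne_zero, sub_ne_zero]
      simp only [Finset.coe_erase, Set.mem_diff, Finset.mem_coe, Finset.mem_range] at ha hb
      intro habs
      exact hab (hζ.pow_inj ha.1 hb.1 habs)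
    · exact hdvd
end

section
/- Let g(S) ∈ ℂ[S] be a polynomial and f(t) ∈ ℂ[t] a polynomial of degree ℓ. Define the action of the shift operator by (S f)(t) = f(t-1), extended linearly so that (Σ_k a_k S^k) f(t) = Σ_k a_k f(t-k). Then g(S) f(t) = 0 (as a polynomial in t) if and only if (1-S)^{ℓ+1} divides g(S). -/
open Polynomial

/-- The action of a polynomial `g` in the shift operator `S`, `(S f)(t) = f(t-1)`,
on a polynomial `f`: `(∑ₖ aₖ Sᵏ) f (t) = ∑ₖ aₖ f(t-k)`. -/
noncomputable def shiftAction (g f : Polynomial ℂ) : Polynomial ℂ :=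
  g.sum fun k a => Polynomial.C a * f.comp (X - Polynomial.C (k : ℂ))

private lemma wb_lt_succ (x : WithBot ℕ) (n : ℕ) : x < (n : WithBot ℕ) + 1 ↔ x ≤ n := by
  have h1 : ((n : WithBot ℕ) + 1) = ((n + 1 : ℕ) : WithBot ℕ) := by push_cast; ring
  rw [h1, Nat.cast_withBot, Nat.cast_withBot]
  cases x with
  | bot => simpa using bot_lt_iff_ne_bot.mpr (by simp)
  | coe m => rw [WithBot.coe_lt_coe, WithBot.coe_le_coe]; exact Nat.lt_succ_iff

/-- The shift endomorphism `S`. -/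
noncomputable def Tsh : Module.End ℂ (Polynomial ℂ) := taylor (-1)

private lemma Tsh_pow (k : ℕ) (f : Polynomial ℂ) :
    (Tsh ^ k) f = f.comp (X - Polynomial.C (k : ℂ)) := by
  induction k generalizing f with
  | zero => simp [Tsh]
  | succ k ih =>
    rw [pow_succ', Module.End.mul_apply, ih, Tsh, taylor_apply, comp_assoc]
    congr 1
    rw [sub_comp, X_comp, C_comp, Nat.cast_add, Nat.cast_one, map_add, map_neg, map_one]
    ring

private lemma shiftAction_eq (g f : Polynomial ℂ) : shiftAction g f = (aeval Tsh g) f := by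
  rw [shiftAction, aeval_def, eval₂_eq_sum, Polynomial.sum_def, Polynomial.sum_def,
    LinearMap.sum_apply]
  refine Finset.sum_congr rfl fun k _ => ?_
  rw [Module.End.mul_apply, Module.algebraMap_end_apply, Tsh_pow, Polynomial.smul_eq_C_mul]

private lemma shiftAction_mul (u v f : Polynomial ℂ) :
    shiftAction (u * v) f = shiftAction u (shiftAction v f) := by
  simp only [shiftAction_eq, map_mul, Module.End.mul_apply]

private lemma shiftAction_add (u v f : Polynomial ℂ) :
    shiftAction (u + v) f = shiftAction u f + shiftAction v f := by
  simp only [shiftAction_eq, map_add, LinearMap.add_apply]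

private lemma shiftAction_one (f : Polynomial ℂ) : shiftAction 1 f = f := by
  simp only [shiftAction_eq, map_one, Module.End.one_apply]

private lemma shiftAction_zero_right (g : Polynomial ℂ) : shiftAction g 0 = 0 := by
  simp [shiftAction, Polynomial.sum_def]

private lemma X_add_neg_one : (X + Polynomial.C (-1 : ℂ)) = X - Polynomial.C 1 := by
  rw [map_neg, ← sub_eq_add_neg]

private lemma shiftAction_osX (f : Polynomial ℂ) :
    shiftAction (1 - X) f = f - f.comp (X - Polynomial.C 1) := by
  simp only [shiftAction_eq, map_sub, LinearMap.sub_apply, map_one, Module.End.one_apply,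
    aeval_X, Tsh, taylor_apply, X_add_neg_one]

private lemma comp_eq_taylor (f : Polynomial ℂ) (c : ℂ) :
    f.comp (X - Polynomial.C c) = taylor (-c) f := by
  rw [taylor_apply]; congr 1; rw [map_neg, ← sub_eq_add_neg]

private lemma degree_osX_lt (f : Polynomial ℂ) (hf : f ≠ 0) :
    (shiftAction (1 - X) f).degree < f.degree := by
  rw [shiftAction_osX]
  have ht : f.comp (X - Polynomial.C 1) = taylor (-1 : ℂ) f := comp_eq_taylor f 1
  have hne : f.comp (X - Polynomial.C 1) ≠ 0 := by
    rw [ht, taylor_apply]; exact comp_X_add_C_ne_zero_iff.mpr hf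
  refine degree_sub_lt ?_ hf ?_
  · rw [degree_eq_natDegree hf, degree_eq_natDegree hne, ht, natDegree_taylor]
  · have h1 : (X - Polynomial.C (1 : ℂ)).natDegree = 1 := natDegree_X_sub_C _
    have h3 := leadingCoeff_comp (p := f) (q := X - Polynomial.C (1 : ℂ)) (by rw [h1]; norm_num)
    rw [(monic_X_sub_C (1 : ℂ)).leadingCoeff, one_pow, mul_one] at h3
    exact h3.symm

private lemma coeff_osX (m : ℕ) (f : Polynomial ℂ) (hf : f.degree = ((m + 1 : ℕ) : WithBot ℕ)) :
    (shiftAction (1 - X) f).coeff m = (m + 1 : ℂ) * f.coeff (m + 1) := by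
  rw [shiftAction_osX, coeff_sub, comp_eq_taylor f 1, taylor_coeff]
  have hnd : f.natDegree = m + 1 := natDegree_eq_of_degree_eq_some hf
  have h2 : ((hasseDeriv m) f).natDegree < 2 := by
    rw [natDegree_hasseDeriv, hnd]; omega
  rw [eval_eq_sum_range' h2]
  simp only [Finset.sum_range_succ, Finset.sum_range_zero, hasseDeriv_coeff, zero_add,
    Nat.choose_self, Nat.cast_one, one_mul, pow_zero, mul_one, pow_one]
  have hch : (1 + m).choose m = m + 1 := by rw [add_comm]; exact Nat.choose_succ_self_right m
  rw [hch]
  have : (1 + m) = m + 1 := by omega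
  rw [this]
  push_cast
  ring

private lemma degree_osX_eq (m : ℕ) (f : Polynomial ℂ)
    (hf : f.degree = ((m + 1 : ℕ) : WithBot ℕ)) :
    (shiftAction (1 - X) f).degree = (m : WithBot ℕ) := by
  have hne : f ≠ 0 := fun h => by
    rw [h, degree_zero, Nat.cast_withBot] at hf
    exact WithBot.bot_ne_coe hf
  have hlt := degree_osX_lt f hne
  rw [hf] at hlt
  have hcast : ((m + 1 : ℕ) : WithBot ℕ) = (m : WithBot ℕ) + 1 := by push_cast; ring
  rw [hcast] at hlt
  have hle : (shiftAction (1 - X) f).degree ≤ (m : WithBot ℕ) := (wb_lt_succ _ _).mp hlt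
  have hc : (shiftAction (1 - X) f).coeff m ≠ 0 := by
    rw [coeff_osX m f hf]
    exact mul_ne_zero (Nat.cast_add_one_ne_zero m) (coeff_ne_zero_of_eq_degree hf)
  exact le_antisymm hle (le_degree_of_ne_zero hc)

private lemma coeff_shiftAction_top (r f : Polynomial ℂ) (ℓ : ℕ)
    (hf : f.degree = (ℓ : WithBot ℕ)) :
    (shiftAction r f).coeff ℓ = r.eval 1 * f.coeff ℓ := by
  have hnd : f.natDegree = ℓ := natDegree_eq_of_degree_eq_some hf
  have key : ∀ k : ℕ, (f.comp (X - Polynomial.C (k : ℂ))).coeff ℓ = f.coeff ℓ := by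
    intro k
    have h1 : (X - Polynomial.C ((k : ℂ))).natDegree = 1 := natDegree_X_sub_C _
    have h2 : (f.comp (X - Polynomial.C (k : ℂ))).natDegree = ℓ := by
      rw [natDegree_comp, h1, mul_one, hnd]
    have h3 := leadingCoeff_comp (p := f) (q := X - Polynomial.C (k : ℂ)) (by rw [h1]; norm_num)
    rw [(monic_X_sub_C ((k : ℂ))).leadingCoeff, one_pow, mul_one] at h3
    calc (f.comp (X - Polynomial.C (k : ℂ))).coeff ℓ
        = (f.comp (X - Polynomial.C (k : ℂ))).leadingCoeff := by rw [leadingCoeff, h2]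
      _ = f.leadingCoeff := h3
      _ = f.coeff ℓ := by rw [leadingCoeff, hnd]
  rw [shiftAction, Polynomial.sum_def, finset_sum_coeff]
  have heval : r.eval 1 = ∑ k ∈ r.support, r.coeff k := by
    rw [eval_eq_sum, Polynomial.sum_def]
    simp
  rw [heval, Finset.sum_mul]
  refine Finset.sum_congr rfl fun k _ => ?_
  rw [coeff_C_mul, key k]

private lemma key_lemma (ℓ : ℕ) : ∀ f : Polynomial ℂ, f.degree = (ℓ : WithBot ℕ) →
    ∀ r : Polynomial ℂ, r.degree ≤ (ℓ : WithBot ℕ) → shiftAction r f = 0 → r = 0 := by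
  induction ℓ with
  | zero =>
    intro f hf r hr h0
    have hc := coeff_shiftAction_top r f 0 hf
    rw [h0, coeff_zero] at hc
    have hfc : f.coeff 0 ≠ 0 := coeff_ne_zero_of_eq_degree hf
    have he : r.eval 1 = 0 := by
      rcases mul_eq_zero.mp hc.symm with h | h
      · exact h
      · exact absurd h hfc
    have hr0 : r.degree ≤ 0 := by exact_mod_cast hr
    rw [eq_C_of_degree_le_zero hr0] at he ⊢
    simpa using he
  | succ m ih =>
    intro f hf r hr h0
    have hc := coeff_shiftAction_top r f (m + 1) hf
    rw [h0, coeff_zero] at hc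
    have hfc : f.coeff (m + 1) ≠ 0 := coeff_ne_zero_of_eq_degree hf
    have he : r.eval 1 = 0 := by
      rcases mul_eq_zero.mp hc.symm with h | h
      · exact h
      · exact absurd h hfc
    obtain ⟨q, hq⟩ := dvd_iff_isRoot.mpr he
    have hdq : q.degree ≤ (m : WithBot ℕ) := by
      rcases eq_or_ne q 0 with h | h
      · rw [h, degree_zero]; exact bot_le
      · have hdr : r.degree = 1 + q.degree := by rw [hq, degree_mul, degree_X_sub_C]
        rw [hdr] at hr
        rw [degree_eq_natDegree h] at hr ⊢
        have hcast : (1 : WithBot ℕ) + (q.natDegree : WithBot ℕ)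
            = ((1 + q.natDegree : ℕ) : WithBot ℕ) := by push_cast; ring
        rw [hcast, Nat.cast_withBot, Nat.cast_withBot, WithBot.coe_le_coe] at hr
        rw [Nat.cast_withBot, Nat.cast_withBot, WithBot.coe_le_coe]
        omega
    have hrw : r = (-q) * (1 - X) := by
      rw [hq]
      have : Polynomial.C (1 : ℂ) = 1 := map_one _
      rw [this]; ring
    have h2 : shiftAction (-q) (shiftAction (1 - X) f) = 0 := by
      rw [← shiftAction_mul, ← hrw, h0]
    have hq0 : -q = 0 := ih (shiftAction (1 - X) f) (degree_osX_eq m f hf) (-q)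
      (by rw [degree_neg]; exact hdq) h2
    rw [hrw, hq0, zero_mul]

private lemma shiftAction_pow_osX : ∀ (n : ℕ) (f : Polynomial ℂ),
    f.degree < (n : WithBot ℕ) → shiftAction ((1 - X) ^ n) f = 0 := by
  intro n
  induction n with
  | zero =>
    intro f hf
    have h0 : f = 0 := by
      apply degree_eq_bot.mp
      cases hd : f.degree with
      | bot => rfl
      | coe d =>
        rw [hd, Nat.cast_withBot, WithBot.coe_lt_coe] at hf
        exact absurd hf (by omega)
    rw [h0, pow_zero, shiftAction_one]
  | succ n ih =>
    intro f hf
    rw [pow_succ, shiftAction_mul]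
    apply ih
    rcases eq_or_ne f 0 with h0 | h0
    · rw [h0, shiftAction_zero_right, degree_zero]
      exact WithBot.bot_lt_coe n
    · have h1 := degree_osX_lt f h0
      have hcast : ((n + 1 : ℕ) : WithBot ℕ) = (n : WithBot ℕ) + 1 := by push_cast; ring
      rw [hcast] at hf
      have h2 : f.degree ≤ (n : WithBot ℕ) := (wb_lt_succ _ _).mp hf
      exact lt_of_lt_of_le h1 h2

/-- for `f` of degree `ℓ`, `g(S) f = 0` iff `(1-S)^(ℓ+1)` divides `g(S)`. -/
theorem stmt2 (g f : Polynomial ℂ) (ℓ : ℕ) (hf : f.degree = ℓ) :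
    shiftAction g f = 0 ↔ (1 - X : Polynomial ℂ) ^ (ℓ + 1) ∣ g := by
  have hcast : ((ℓ + 1 : ℕ) : WithBot ℕ) = (ℓ : WithBot ℕ) + 1 := by push_cast; ring
  have hpow0 : shiftAction ((1 - X) ^ (ℓ + 1)) f = 0 := by
    apply shiftAction_pow_osX
    rw [hcast, hf]
    exact (wb_lt_succ _ _).mpr le_rfl
  constructor
  · intro h0
    set P : Polynomial ℂ := (X - Polynomial.C 1) ^ (ℓ + 1) with hP
    have hmon : P.Monic := (monic_X_sub_C (1 : ℂ)).pow _
    have hPeq : P = ((-1 : Polynomial ℂ) ^ (ℓ + 1)) * (1 - X) ^ (ℓ + 1) := by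
      rw [← mul_pow, hP]
      congr 1
      have : Polynomial.C (1 : ℂ) = 1 := map_one _
      rw [this]; ring
    have hPval : shiftAction P f = 0 := by
      rw [hPeq, shiftAction_mul, hpow0, shiftAction_zero_right]
    have hsum := modByMonic_add_div g P
    have hmod : shiftAction (g %ₘ P) f = 0 := by
      have hh : shiftAction (g %ₘ P + P * (g /ₘ P)) f = 0 := by rw [hsum, h0]
      rw [shiftAction_add, mul_comm, shiftAction_mul, hPval, shiftAction_zero_right,
        add_zero] at hh
      exact hh
    have hdeg : (g %ₘ P).degree ≤ (ℓ : WithBot ℕ) := by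
      have hlt := degree_modByMonic_lt g hmon
      have hdP : P.degree = (ℓ : WithBot ℕ) + 1 := by
        rw [hP, degree_pow, degree_X_sub_C, ← hcast]
        simp [Nat.cast_withBot]
      rw [hdP] at hlt
      exact (wb_lt_succ _ _).mp hlt
    have hr0 : g %ₘ P = 0 := key_lemma ℓ f hf _ hdeg hmod
    have hdvd : P ∣ g := (modByMonic_eq_zero_iff_dvd hmon).mp hr0
    exact dvd_trans (Dvd.intro_left _ hPeq.symm) hdvd
  · rintro ⟨q, rfl⟩
    rw [mul_comm, shiftAction_mul, hpow0, shiftAction_zero_right]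
end

section
/- Let f: ℤ → ℂ be a quasi-polynomial of degree ℓ with period n, let g(t) be a polynomial, let m be an integer, and let c be a positive multiple of n/gcd(m,n). Then ([c]_{S^m})^{ℓ+1} g(S^m) f(t) = ([c]_{S̄^m})^{ℓ+1} g(S̄^m) f̃^{gcd(m,n)}(t), where S is the shift operator (S f)(t) = f(t-1), S̄ is its constituent-wise version, and f̃^k is the cyclic average of f. -/
open Polynomial Finset


/-- sum over blocks of length q, each window-sum zero -/
lemma sum_blocks {M : Type*} [AddCommMonoid M] (v : ℕ → M) (q c : ℕ)
    (hwin : ∀ k₀, ∑ r ∈ Finset.range q, v (k₀ + r) = 0) (hqc : q ∣ c) :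
    ∀ k₀, ∑ j ∈ Finset.range c, v (k₀ + j) = 0 := by
  obtain ⟨w, rfl⟩ := hqc
  induction w with
  | zero => simp
  | succ w ih =>
    intro k₀
    have h : q * (w + 1) = q * w + q := by ring
    rw [h, Finset.sum_range_add, ih k₀]
    rw [zero_add]
    have : ∀ r, v (k₀ + (q * w + r)) = v ((k₀ + q * w) + r) := fun r => by ring_nf
    simp_rw [this]
    exact hwin _

lemma sum_periodic_blocks {M : Type*} [AddCommMonoid M] (v : ℕ → M) (q w : ℕ)
    (hper : ∀ k, v (k + q) = v k) :
    ∑ i ∈ Finset.range (q * w), v i = w • ∑ i ∈ Finset.range q, v i := by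
  induction w with
  | zero => simp
  | succ w ih =>
    have h : q * (w + 1) = q * w + q := by ring
    rw [h, Finset.sum_range_add, ih, succ_nsmul]
    congr 1
    apply Finset.sum_congr rfl
    intro r _
    have key : ∀ s, v (r + q * s) = v r := by
      intro s
      induction s with
      | zero => simp
      | succ s ihs => rw [Nat.mul_succ, ← Nat.add_assoc, hper, ihs]
    rw [Nat.add_comm (q*w) r, key w]


noncomputable def Phi (p : Polynomial ℂ) (u : ℕ → ℂ) : ℂ := p.sum fun k a => a * u k

lemma Phi_zero (u : ℕ → ℂ) : Phi 0 u = 0 := by simp [Phi]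

lemma Phi_add (p q : Polynomial ℂ) (u : ℕ → ℂ) : Phi (p + q) u = Phi p u + Phi q u :=
  Polynomial.sum_add_index p q _ (fun _ => by ring) (fun _ _ _ => by ring)

lemma Phi_finset_sum {ι : Type*} (s : Finset ι) (h : ι → Polynomial ℂ) (u : ℕ → ℂ) :
    Phi (∑ j ∈ s, h j) u = ∑ j ∈ s, Phi (h j) u := by
  classical
  induction s using Finset.induction with
  | empty => simp [Phi_zero]
  | insert _ _ hx ih => rw [Finset.sum_insert hx, Finset.sum_insert hx, Phi_add, ih]

lemma Phi_C_mul (b : ℂ) (p : Polynomial ℂ) (u : ℕ → ℂ) :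
    Phi (C b * p) u = b * Phi p u := by
  rw [← Polynomial.smul_eq_C_mul, Phi]
  rw [Polynomial.sum_smul_index _ _ _ (fun i => by ring)]
  rw [Phi, Polynomial.sum_def, Polynomial.sum_def, Finset.mul_sum]
  exact Finset.sum_congr rfl fun k _ => by ring

lemma Phi_mul_X_pow (p : Polynomial ℂ) (j : ℕ) (u : ℕ → ℂ) :
    Phi (p * X ^ j) u = Phi p (fun k => u (k + j)) := by
  set N := p.natDegree + 1 with hN
  have h1 : (p * X ^ j).natDegree < N + j := by
    calc (p * X ^ j).natDegree ≤ p.natDegree + (X ^ j : Polynomial ℂ).natDegree :=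
          Polynomial.natDegree_mul_le
    _ ≤ p.natDegree + j := by rw [Polynomial.natDegree_X_pow]
    _ < N + j := by omega
  rw [Phi, Polynomial.sum_over_range' _ (fun _ => by ring) _ h1]
  rw [Phi, Polynomial.sum_over_range' _ (fun _ => by ring) _ (by omega : p.natDegree < N)]
  simp_rw [Polynomial.coeff_mul_X_pow']
  rw [Finset.range_eq_Ico, ← Finset.sum_Ico_consecutive _ (Nat.zero_le j) (by omega : j ≤ N + j)]
  have h2 : ∑ k ∈ Finset.Ico 0 j, (if j ≤ k then p.coeff (k - j) else 0) * u k = 0 := by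
    apply Finset.sum_eq_zero
    intro k hk
    simp only [Finset.mem_Ico] at hk
    rw [if_neg (by omega), zero_mul]
  rw [h2, zero_add, Finset.sum_Ico_eq_sum_range]
  have h3 : N + j - j = N := by omega
  rw [h3]
  apply Finset.sum_congr rfl
  intro i _
  rw [if_pos (by omega)]
  congr 2 <;> omega

lemma Phi_mul (p q : Polynomial ℂ) (u : ℕ → ℂ) :
    Phi (p * q) u = q.sum fun j b => b * Phi p (fun k => u (k + j)) := by
  induction q using Polynomial.induction_on' with
  | add q r ihq ihr =>
    rw [mul_add, Phi_add, ihq, ihr,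
      Polynomial.sum_add_index _ _ _ (fun _ => by ring) (fun _ _ _ => by ring)]
  | monomial j b =>
    rw [Polynomial.sum_monomial_index _ _ (by ring)]
    rw [← Polynomial.C_mul_X_pow_eq_monomial, show p * (C b * X ^ j) = C b * (p * X ^ j) by ring,
      Phi_C_mul, Phi_mul_X_pow]

noncomputable def Cop (c : ℕ) (u : ℕ → ℂ) : ℕ → ℂ := fun k => ∑ j ∈ Finset.range c, u (k + j)

lemma Phi_u_sum (p : Polynomial ℂ) (c : ℕ) (u : ℕ → ℂ) :
    Phi p (Cop c u) = ∑ j ∈ Finset.range c, Phi p (fun k => u (k + j)) := by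
  rw [Phi, Polynomial.sum_def]
  simp_rw [Cop, Finset.mul_sum]
  rw [Finset.sum_comm]
  apply Finset.sum_congr rfl
  intro j _
  rw [Phi, Polynomial.sum_def]

lemma geom_coeff (c j : ℕ) :
    (∑ i ∈ Finset.range c, (X : Polynomial ℂ) ^ i).coeff j = if j < c then 1 else 0 := by
  rw [Polynomial.finset_sum_coeff]
  simp_rw [Polynomial.coeff_X_pow]
  rw [Finset.sum_ite_eq (Finset.range c) j (fun _ => (1:ℂ))]
  simp [Finset.mem_range]

lemma Phi_mul_geom (p : Polynomial ℂ) (c : ℕ) (u : ℕ → ℂ) :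
    Phi (p * ∑ i ∈ Finset.range c, (X : Polynomial ℂ) ^ i) u = Phi p (Cop c u) := by
  rw [Finset.mul_sum, Phi_finset_sum, Phi_u_sum]
  exact Finset.sum_congr rfl fun j _ => Phi_mul_X_pow p j u

lemma Phi_mul_geom_pow (p : Polynomial ℂ) (c : ℕ) (u : ℕ → ℂ) (s : ℕ) :
    Phi (p * (∑ i ∈ Finset.range c, (X : Polynomial ℂ) ^ i) ^ s) u = Phi p ((Cop c)^[s] u) := by
  induction s generalizing u with
  | zero => simp
  | succ s ih =>
    rw [pow_succ, ← mul_assoc, Phi_mul_geom, ih, Function.iterate_succ_apply]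


lemma coeff_top_comp (p : Polynomial ℂ) (a : ℂ) (L : ℕ) (h : p.natDegree ≤ L + 1) :
    (p.comp (X - C a)).coeff (L + 1) = p.coeff (L + 1) := by
  have hq : (X - C a : Polynomial ℂ).natDegree = 1 := Polynomial.natDegree_X_sub_C a
  have hcomp : (p.comp (X - C a)).natDegree = p.natDegree := by
    rw [Polynomial.natDegree_comp, hq, mul_one]
  rcases eq_or_lt_of_le h with heq | hlt
  · have h1 : (p.comp (X - C a)).natDegree = L + 1 := by rw [hcomp, heq]
    have h2 : (p.comp (X - C a)).coeff (L + 1) = (p.comp (X - C a)).leadingCoeff := by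
      rw [Polynomial.leadingCoeff, h1]
    rw [h2, Polynomial.leadingCoeff_comp (by rw [hq]; omega)]
    have : (X - C a : Polynomial ℂ).leadingCoeff = 1 := (Polynomial.monic_X_sub_C a).leadingCoeff
    rw [this, one_pow, mul_one, Polynomial.leadingCoeff, heq]
  · rw [Polynomial.coeff_eq_zero_of_natDegree_lt (by omega : p.natDegree < L + 1),
      Polynomial.coeff_eq_zero_of_natDegree_lt (by rw [hcomp]; omega)]

lemma core (q c : ℕ) (hqc : q ∣ c) (x μ : ℂ) :
    ∀ (L : ℕ) (e : ℕ → Polynomial ℂ),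
      (∀ k₀, ∑ r ∈ Finset.range q, e (k₀ + r) = 0) →
      (∀ k, (e k).natDegree ≤ L) →
      (Cop c)^[L + 1] (fun k => (e k).eval (x - μ * k)) = fun _ => 0 := by
  intro L
  induction L with
  | zero =>
    intro e hwin hdeg
    rw [Function.iterate_one]
    funext k
    simp only [Cop]
    have hconst : ∀ k' (y : ℂ), (e k').eval y = (e k').coeff 0 := by
      intro k' y
      conv_lhs => rw [Polynomial.eq_C_of_natDegree_le_zero (hdeg k')]
      rw [Polynomial.eval_C]
    simp_rw [hconst]
    exact sum_blocks (fun k' => (e k').coeff 0) q c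
      (fun k₀ => by rw [← Polynomial.finset_sum_coeff, hwin k₀, Polynomial.coeff_zero]) hqc k
  | succ L ih =>
    intro e hwin hdeg
    set e' : ℕ → Polynomial ℂ :=
      fun k => ∑ j ∈ Finset.range c, (e (k + j)).comp (X - C (μ * j)) with he'
    have hstep : Cop c (fun k => (e k).eval (x - μ * k)) =
        fun k => (e' k).eval (x - μ * k) := by
      funext k
      simp only [Cop]
      rw [he', Polynomial.eval_finset_sum]
      apply Finset.sum_congr rfl
      intro j _
      rw [Polynomial.eval_comp]
      simp only [Polynomial.eval_sub, Polynomial.eval_X, Polynomial.eval_C]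
      congr 1
      push_cast
      ring
    have hwin' : ∀ k₀, ∑ r ∈ Finset.range q, e' (k₀ + r) = 0 := by
      intro k₀
      simp_rw [he']
      rw [Finset.sum_comm]
      apply Finset.sum_eq_zero
      intro j _
      have hsumcomp : ∀ (s : Finset ℕ) (f : ℕ → Polynomial ℂ) (r : Polynomial ℂ),
          (∑ b ∈ s, f b).comp r = ∑ b ∈ s, (f b).comp r := by
        intro s f r
        classical
        induction s using Finset.induction with
        | empty => simp
        | insert _ _ hx ihs => rw [Finset.sum_insert hx, Finset.sum_insert hx,
            Polynomial.add_comp, ihs]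
      have : ∑ r' ∈ Finset.range q, (e (k₀ + r' + j)).comp (X - C (μ * j))
          = (∑ r' ∈ Finset.range q, e ((k₀ + j) + r')).comp (X - C (μ * j)) := by
        rw [hsumcomp]
        apply Finset.sum_congr rfl
        intro r' _
        congr 2
        omega
      rw [this, hwin (k₀ + j), Polynomial.zero_comp]
    have hdeg' : ∀ k, (e' k).natDegree ≤ L := by
      intro k
      rw [Polynomial.natDegree_le_iff_coeff_eq_zero]
      intro N hN
      rw [he', Polynomial.finset_sum_coeff]
      rcases eq_or_lt_of_le (show L + 1 ≤ N by omega) with heq | hlt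
      · subst heq
        have : ∀ j ∈ Finset.range c,
            ((e (k + j)).comp (X - C (μ * j))).coeff (L + 1) = (e (k + j)).coeff (L + 1) :=
          fun j _ => coeff_top_comp _ _ _ (hdeg (k + j))
        rw [Finset.sum_congr rfl this]
        exact sum_blocks (fun k' => (e k').coeff (L + 1)) q c
          (fun k₀ => by rw [← Polynomial.finset_sum_coeff, hwin k₀, Polynomial.coeff_zero])
          hqc k
      · apply Finset.sum_eq_zero
        intro j _
        apply Polynomial.coeff_eq_zero_of_natDegree_lt
        calc ((e (k + j)).comp (X - C (μ * j))).natDegree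
            ≤ (e (k + j)).natDegree * (X - C (μ * j)).natDegree := Polynomial.natDegree_comp_le
          _ ≤ (L + 1) * 1 := by
              rw [Polynomial.natDegree_X_sub_C]
              exact Nat.mul_le_mul_right 1 (hdeg (k + j))
          _ < N := by omega
    rw [show L + 1 + 1 = (L + 1) + 1 from rfl, Function.iterate_succ_apply, hstep]
    exact ih e' hwin' hdeg'


lemma keybij (n : ℕ) [NeZero n] (m : ℤ) (t a : ℤ) (hda : (Int.gcd m n : ℤ) ∣ a)
    (G : ZMod n → Polynomial ℂ) :
    ∑ r ∈ Finset.range (n / Int.gcd m n), G (((t - a - m * r : ℤ) : ZMod n))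
      = ∑ j ∈ Finset.range (n / Int.gcd m n),
          G ((t : ZMod n) - (j : ZMod n) * ((Int.gcd m n : ℕ) : ZMod n)) := by
  set d : ℕ := Int.gcd m n with hd
  set q : ℕ := n / d with hq
  have hn0 : n ≠ 0 := NeZero.ne n
  have hd0 : d ≠ 0 := fun h => hn0 (by exact_mod_cast (Int.gcd_eq_zero_iff.mp h).2)
  have hdn : d ∣ n := by exact_mod_cast Int.gcd_dvd_right (a := m) (b := (n : ℤ))
  have hdqn : d * q = n := Nat.mul_div_cancel' hdn
  have hq0 : 0 < q := Nat.pos_of_ne_zero (fun h => hn0 (by rw [← hdqn, h, Nat.mul_zero]))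
  have hqZ : (0 : ℤ) < (q : ℤ) := by exact_mod_cast hq0
  have hdm : (d : ℤ) ∣ m := Int.gcd_dvd_left m (n : ℤ)
  obtain ⟨m', hm'⟩ := hdm
  obtain ⟨a', ha'⟩ := hda
  have hcop : Int.gcd m' (q : ℤ) = 1 := by
    have h1 : ((d : ℤ) * m').gcd ((d : ℤ) * q) = (d : ℤ).natAbs * m'.gcd (q : ℤ) :=
      Int.gcd_mul_left _ _ _
    have h2 : ((d : ℤ) * m').gcd ((d : ℤ) * q) = d := by
      rw [← hm']
      have h3 : (d : ℤ) * (q : ℤ) = (n : ℤ) := by exact_mod_cast hdqn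
      rw [h3, ← hd]
    rw [h2, Int.natAbs_natCast] at h1
    have := Nat.eq_of_mul_eq_mul_left (Nat.pos_of_ne_zero hd0)
      (show d * m'.gcd (q:ℤ) = d * 1 by omega)
    exact this
  set A : ℤ := Int.gcdA m' (q : ℤ) with hA
  have hbez : m' * A ≡ 1 [ZMOD (q : ℤ)] := by
    have h1 : (1 : ℤ) = m' * A + (q : ℤ) * Int.gcdB m' (q : ℤ) := by
      have := Int.gcd_eq_gcd_ab m' (q : ℤ)
      rw [hcop] at this
      exact_mod_cast this
    show m' * A % (q : ℤ) = 1 % (q : ℤ)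
    conv_rhs => rw [h1]
    rw [Int.add_mul_emod_self_left]
  -- helper facts
  have hmem : ∀ x : ℤ, (x % (q : ℤ)).toNat < q := by
    intro x
    have h1 := Int.emod_nonneg x (ne_of_gt hqZ)
    have h2 := Int.emod_lt_of_pos x hqZ
    omega
  have hcast : ∀ x : ℤ, ((x % (q : ℤ)).toNat : ℤ) = x % (q : ℤ) := fun x =>
    Int.toNat_of_nonneg (Int.emod_nonneg x (ne_of_gt hqZ))
  have hself : ∀ x : ℤ, x % (q : ℤ) ≡ x [ZMOD (q : ℤ)] := fun x =>
    Int.emod_emod_of_dvd x dvd_rfl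
  set φ : ℕ → ℕ := fun r => ((a' + m' * r) % (q : ℤ)).toNat with hφ
  set ψ : ℕ → ℕ := fun j => ((A * ((j : ℤ) - a')) % (q : ℤ)).toNat with hψ
  have hmodeq_toNat : ∀ (x : ℤ) (r : ℕ), r < q → x ≡ (r : ℤ) [ZMOD (q : ℤ)] →
      (x % (q : ℤ)).toNat = r := by
    intro x r hr hx
    have h1 : x % (q : ℤ) = (r : ℤ) % (q : ℤ) := hx
    rw [h1, Int.emod_eq_of_lt (by positivity) (by exact_mod_cast hr)]
    simp
  apply Finset.sum_nbij' (i := φ) (j := ψ)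
  · intro r _
    exact Finset.mem_range.mpr (hmem _)
  · intro j _
    exact Finset.mem_range.mpr (hmem _)
  · -- ψ (φ r) = r
    intro r hr
    rw [Finset.mem_range] at hr
    apply hmodeq_toNat _ _ hr
    calc A * ((φ r : ℤ) - a')
        ≡ A * ((a' + m' * r) - a') [ZMOD (q:ℤ)] := by
          rw [hφ]
          exact ((hcast _ ▸ hself (a' + m' * r)).sub_right a').mul_left A
      _ = m' * A * r := by ring
      _ ≡ 1 * r [ZMOD (q:ℤ)] := hbez.mul_right r
      _ = (r : ℤ) := by ring
  · -- φ (ψ j) = j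
    intro j hj
    rw [Finset.mem_range] at hj
    apply hmodeq_toNat _ _ hj
    calc a' + m' * (ψ j : ℤ)
        ≡ a' + m' * (A * ((j : ℤ) - a')) [ZMOD (q:ℤ)] := by
          rw [hψ]
          exact ((hcast _ ▸ hself (A * ((j:ℤ) - a'))).mul_left m').add_left a'
      _ = a' + (m' * A) * ((j : ℤ) - a') := by ring
      _ ≡ a' + 1 * ((j : ℤ) - a') [ZMOD (q:ℤ)] := ((hbez.mul_right _).add_left a')
      _ = (j : ℤ) := by ring
  · -- values
    intro r _
    congr 1
    have hcast2 : (t : ZMod n) - (φ r : ZMod n) * ((d : ℕ) : ZMod n)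
        = ((t - (φ r : ℤ) * (d : ℤ) : ℤ) : ZMod n) := by push_cast; ring
    rw [hcast2]
    rw [ZMod.intCast_eq_intCast_iff]
    have key : (n : ℤ) ∣ (t - (φ r : ℤ) * (d : ℤ)) - (t - a - m * r) := by
      have h1 : (φ r : ℤ) = (a' + m' * r) % (q : ℤ) := hcast _
      have h2 : (q : ℤ) ∣ (a' + m' * r) - (φ r : ℤ) := by
        rw [h1, Int.emod_def]
        exact ⟨(a' + m' * r) / (q : ℤ), by ring⟩
      obtain ⟨w, hw⟩ := h2
      have hn : (n : ℤ) = (d : ℤ) * (q : ℤ) := by exact_mod_cast hdqn.symm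
      refine ⟨w, ?_⟩
      rw [hn]
      have : (t - (φ r : ℤ) * (d : ℤ)) - (t - a - m * r)
          = (d : ℤ) * ((a' + m' * r) - (φ r : ℤ)) := by
        rw [ha', hm']; ring
      rw [this, hw]; ring
    exact Int.modEq_iff_dvd.mpr key

/-- let `f` be a quasi-polynomial of degree `ℓ` with period `n`,
given by constituents `cs j` for `t ≡ j mod n` (so `f(t) = (cs t̄).eval t`), let `g`
be a polynomial, `m` an integer and `c` a positive multiple of `n / gcd(m,n)`.  Writing
`P(X) = ([c]_X)^(ℓ+1) g(X)`, the shift operator `S` (`(S^s f)(t) = f(t-s)`), its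
constituent-wise version `S̄` (`(S̄^s f)(t) = f_{t mod n}(t-s)`), and the cyclic average
`f̃^k` (with constituent `(1/n) ∑_{i<n} cs(j - i·k)` at `j`), we have
`([c]_{S^m})^(ℓ+1) g(S^m) f (t) = ([c]_{S̄^m})^(ℓ+1) g(S̄^m) f̃^{gcd(m,n)} (t)`. -/
theorem stmt19 (n : ℕ) [NeZero n] (cs : ZMod n → Polynomial ℂ) (ℓ : ℕ)
    (hdeg : (Finset.univ.sup fun j : ZMod n => (cs j).natDegree) = ℓ)
    (g : Polynomial ℂ) (m : ℤ) (c : ℕ) (hc : 0 < c)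
    (hdvd : (n / Int.gcd m n) ∣ c) :
    ∀ t : ℤ,
      (((∑ i ∈ Finset.range c, (X : Polynomial ℂ) ^ i) ^ (ℓ + 1) * g).sum fun k a =>
          a * (cs (((t - m * k : ℤ) : ZMod n))).eval ((t - m * k : ℤ) : ℂ)) =
      (((∑ i ∈ Finset.range c, (X : Polynomial ℂ) ^ i) ^ (ℓ + 1) * g).sum fun k a =>
          a * ((n : ℂ)⁻¹ * ∑ i ∈ Finset.range n,
            (cs ((t : ZMod n) - (i : ZMod n) * ((Int.gcd m n : ℕ) : ZMod n))).eval
              ((t - m * k : ℤ) : ℂ))) := by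
  intro t
  set d : ℕ := Int.gcd m n with hd
  set q : ℕ := n / d with hq
  have hn0 : n ≠ 0 := NeZero.ne n
  have hd0 : d ≠ 0 := fun h => hn0 (by exact_mod_cast (Int.gcd_eq_zero_iff.mp h).2)
  have hdn : d ∣ n := by exact_mod_cast Int.gcd_dvd_right (a := m) (b := (n : ℤ))
  have hdqn : d * q = n := Nat.mul_div_cancel' hdn
  have hq0 : 0 < q := Nat.pos_of_ne_zero (fun h => hn0 (by rw [← hdqn, h, Nat.mul_zero]))
  set avg : Polynomial ℂ :=
    (n : ℂ)⁻¹ • ∑ i ∈ Finset.range n, cs ((t : ZMod n) - (i : ZMod n) * (d : ZMod n))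
    with havg
  set e : ℕ → Polynomial ℂ := fun k => cs (((t - m * k : ℤ) : ZMod n)) - avg with he
  set u : ℕ → ℂ := fun k => (e k).eval ((t : ℂ) - (m : ℂ) * k) with hu
  set P : Polynomial ℂ := (∑ i ∈ Finset.range c, (X : Polynomial ℂ) ^ i) ^ (ℓ + 1) * g
    with hP
  -- constituent degrees
  have hcs : ∀ j : ZMod n, (cs j).natDegree ≤ ℓ := by
    intro j
    rw [← hdeg]
    exact Finset.le_sup (f := fun j : ZMod n => (cs j).natDegree) (Finset.mem_univ j)
  have havgdeg : avg.natDegree ≤ ℓ := by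
    apply le_trans (Polynomial.natDegree_smul_le _ _)
    exact Polynomial.natDegree_sum_le_of_forall_le _ _ (fun i _ => hcs _)
  have hedeg : ∀ k, (e k).natDegree ≤ ℓ := by
    intro k
    apply le_trans (Polynomial.natDegree_sub_le _ _)
    exact max_le (hcs _) havgdeg
  -- window sums vanish
  have hwin : ∀ k₀, ∑ r ∈ Finset.range q, e (k₀ + r) = 0 := by
    intro k₀
    simp only [he]
    rw [Finset.sum_sub_distrib, Finset.sum_const, Finset.card_range, sub_eq_zero]
    have hstep1 : ∑ r ∈ Finset.range q, cs (((t - m * ((k₀ + r : ℕ) : ℤ) : ℤ) : ZMod n))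
        = ∑ r ∈ Finset.range q, cs (((t - (m * k₀) - m * r : ℤ) : ZMod n)) := by
      apply Finset.sum_congr rfl
      intro r _
      congr 2
      push_cast
      ring
    have hstep2 := keybij n m t (m * (k₀ : ℤ))
      (Dvd.dvd.mul_right (Int.gcd_dvd_left m (n : ℤ)) (k₀ : ℤ)) cs
    rw [hstep1, hstep2]
    set T : Polynomial ℂ :=
      ∑ j ∈ Finset.range q, cs ((t : ZMod n) - (j : ZMod n) * (d : ZMod n)) with hT
    have hS : ∑ i ∈ Finset.range n, cs ((t : ZMod n) - (i : ZMod n) * (d : ZMod n))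
        = d • T := by
      have hper : ∀ k : ℕ,
          cs ((t : ZMod n) - ((k + q : ℕ) : ZMod n) * (d : ZMod n))
            = cs ((t : ZMod n) - (k : ZMod n) * (d : ZMod n)) := by
        intro k
        congr 1
        have hqd0 : ((q : ZMod n)) * (d : ZMod n) = 0 := by
          rw [← Nat.cast_mul, Nat.mul_comm, hdqn]
          exact ZMod.natCast_self n
        push_cast
        rw [add_mul, hqd0, add_zero]
      have hblocks := sum_periodic_blocks
        (fun k => cs ((t : ZMod n) - (k : ZMod n) * (d : ZMod n))) q d hper
      rw [show q * d = n by rw [Nat.mul_comm q d]; exact hdqn] at hblocks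
      exact hblocks
    rw [havg, hS]
    have hsmul : q • ((n : ℂ)⁻¹ • (d • T)) = ((q : ℂ) * (n : ℂ)⁻¹ * (d : ℂ)) • T := by
      rw [← Nat.cast_smul_eq_nsmul ℂ q, ← Nat.cast_smul_eq_nsmul ℂ d, smul_smul, smul_smul,
        mul_assoc]
    rw [hsmul]
    have hqd : (q : ℂ) * (d : ℂ) = (n : ℂ) := by
      have h := hdqn
      rw [Nat.mul_comm] at h
      exact_mod_cast congrArg (Nat.cast : ℕ → ℂ) h
    have hone : (q : ℂ) * (n : ℂ)⁻¹ * (d : ℂ) = 1 := by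
      calc (q : ℂ) * (n : ℂ)⁻¹ * (d : ℂ) = (q : ℂ) * (d : ℂ) * (n : ℂ)⁻¹ := by ring
        _ = (n : ℂ) * (n : ℂ)⁻¹ := by rw [hqd]
        _ = 1 := mul_inv_cancel₀ (Nat.cast_ne_zero.mpr hn0)
    rw [hone, one_smul]
  -- the core vanishing
  have hcore : (Cop c)^[ℓ + 1] u = fun _ => 0 := by
    rw [hu]
    exact core q c hdvd (t : ℂ) (m : ℂ) ℓ e hwin hedeg
  have hPhi : Phi P u = 0 := by
    rw [hP, mul_comm, Phi_mul_geom_pow, hcore]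
    simp [Phi, Polynomial.sum_def]
  rw [← sub_eq_zero, ← hPhi]
  rw [Phi, Polynomial.sum_def, Polynomial.sum_def, Polynomial.sum_def,
    ← Finset.sum_sub_distrib]
  apply Finset.sum_congr rfl
  intro k _
  rw [← mul_sub]
  congr 1
  simp only [hu, he]
  rw [Polynomial.eval_sub]
  congr 1
  · congr 1
    push_cast
    ring
  · rw [havg, Polynomial.eval_smul, smul_eq_mul, Polynomial.eval_finset_sum]
    congr 1
    apply Finset.sum_congr rfl
    intro i _
    congr 1
    push_cast
    ring
end
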